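/- Under the class-dependent label noise model, assume there is a measurable map x ↦ y_x such that for μ-almost every x, y_x maximizes y ↦ η_y(x) and y_x also maximizes ỹ ↦ η^ρ_{ỹ}(x). Let s ∈ [0,1] satisfy R* ≤ s (s is the error of a state-of-the-art model on the clean distribution). Then the Bayes error rate of the noisy distribution satisfies (1 − s) · min_{y∈Y} ρ(y) − s · max_{y', y'' ∈ Y, y' ≠ y''} t_{y', y''} ≤ R*_ρ ≤ s + max_{y∈Y} ρ(y). -/

import Mathlib

open MeasureTheory

set_option maxHeartbeats 400000 in
/-- Bounds on the noisy Bayes error rate in terms of the state-of-the-art error `s`: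
`(1 − s)·min_y ρ(y) − s·max_{y'≠y''} t_{y',y''} ≤ R*_ρ ≤ s + max_y ρ(y)`. -/
theorem ber_class_dependent_noise_sota_bounds
    {X : Type*} [MeasurableSpace X] (μ : Measure X) [IsProbabilityMeasure μ]
    {Y : Type*} [Fintype Y] [Nonempty Y] [DecidableEq Y] [MeasurableSpace Y] [MeasurableSingletonClass Y]
    (hC : 2 ≤ Fintype.card Y)
    (hne : ((Finset.univ : Finset (Y × Y)).filter fun p => p.1 ≠ p.2).Nonempty)
    (η : X → Y → ℝ)
    (hmeas : ∀ y, Measurable fun x => η x y)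
    (hnn : ∀ x y, 0 ≤ η x y)
    (hsum : ∀ x, ∑ y, η x y = 1)
    (t : Y → Y → ℝ)
    (ht0 : ∀ y' y, 0 ≤ t y' y) (ht1 : ∀ y' y, t y' y ≤ 1)
    (htsum : ∀ y, ∑ y', t y' y = 1)
    (ηρ : X → Y → ℝ)
    (hηρ : ∀ x y', ηρ x y' = ∑ y, t y' y * η x y)
    (yx : X → Y) (hyx : Measurable yx)
    (hmax : ∀ᵐ x ∂μ, (∀ y, η x y ≤ η x (yx x)) ∧ ∀ y', ηρ x y' ≤ ηρ x (yx x))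
    (Rstar Rρ : ℝ)
    (hR : Rstar = ∫ x, (1 - ⨆ y, η x y) ∂μ)
    (hRρ : Rρ = ∫ x, (1 - ⨆ y', ηρ x y') ∂μ)
    (s : ℝ) (hs0 : 0 ≤ s) (hs1 : s ≤ 1) (hRs : Rstar ≤ s) :
    (1 - s) * (Finset.univ.inf' Finset.univ_nonempty fun y => 1 - t y y)
        - s * (((Finset.univ : Finset (Y × Y)).filter fun p => p.1 ≠ p.2).sup' hne
            fun p => t p.1 p.2) ≤ Rρ
      ∧ Rρ ≤ s + (Finset.univ.sup' Finset.univ_nonempty fun y => 1 - t y y) := by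

  classical
  set ρmin : ℝ := Finset.univ.inf' Finset.univ_nonempty (fun y : Y => 1 - t y y) with hρmindef
  set ρmax : ℝ := Finset.univ.sup' Finset.univ_nonempty (fun y : Y => 1 - t y y) with hρmaxdef
  set Tmax : ℝ := ((Finset.univ : Finset (Y × Y)).filter fun p => p.1 ≠ p.2).sup' hne
      (fun p => t p.1 p.2) with hTmaxdef
  obtain ⟨y0⟩ := ‹Nonempty Y›
  have hρmin0 : 0 ≤ ρmin := Finset.le_inf' _ _ fun y _ => by linarith [ht1 y y]
  have hρmax0 : 0 ≤ ρmax :=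
    le_trans (by linarith [ht1 y0 y0]) (Finset.le_sup' (fun y : Y => 1 - t y y) (Finset.mem_univ y0))
  have hT0 : 0 ≤ Tmax := by
    obtain ⟨p, hp⟩ := hne
    exact le_trans (ht0 p.1 p.2) (Finset.le_sup' (fun p : Y × Y => t p.1 p.2) hp)
  have hT1 : Tmax ≤ 1 := Finset.sup'_le _ _ fun p _ => ht1 p.1 p.2
  -- bounds on η and its sup
  have hηle1 : ∀ x y, η x y ≤ 1 := fun x y => by
    have := Finset.single_le_sum (f := fun y => η x y) (fun i _ => hnn x i) (Finset.mem_univ y)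
    rwa [hsum x] at this
  have hsuple : ∀ x, (⨆ y, η x y) ≤ 1 := fun x => ciSup_le fun y => hηle1 x y
  have hsupge : ∀ x, 0 ≤ ⨆ y, η x y := fun x =>
    le_trans (hnn x y0) (le_ciSup (Set.Finite.bddAbove (Set.finite_range _)) y0)
  -- bounds on ηρ and its sup
  have hηρnn : ∀ x y', 0 ≤ ηρ x y' := fun x y' => by
    rw [hηρ]
    exact Finset.sum_nonneg fun y _ => mul_nonneg (ht0 y' y) (hnn x y)
  have hηρle1 : ∀ x y', ηρ x y' ≤ 1 := fun x y' => by
    rw [hηρ]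
    calc ∑ y, t y' y * η x y ≤ ∑ y, η x y :=
          Finset.sum_le_sum fun y _ => by
            have := mul_le_mul_of_nonneg_right (ht1 y' y) (hnn x y)
            simpa using this
      _ = 1 := hsum x
  have hsupρle : ∀ x, (⨆ y', ηρ x y') ≤ 1 := fun x => ciSup_le fun y' => hηρle1 x y'
  have hsupρge : ∀ x, 0 ≤ ⨆ y', ηρ x y' := fun x =>
    le_trans (hηρnn x y0) (le_ciSup (Set.Finite.bddAbove (Set.finite_range _)) y0)
  -- measurability
  have hmη : Measurable fun x => ⨆ y, η x y := Measurable.iSup hmeas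
  have hmηρ : ∀ y', Measurable fun x => ηρ x y' := fun y' => by
    have h : (fun x => ηρ x y') = fun x => ∑ y, t y' y * η x y := funext fun x => hηρ x y'
    rw [h]
    exact Finset.measurable_sum _ fun y _ => (hmeas y).const_mul _
  have hmηρsup : Measurable fun x => ⨆ y', ηρ x y' := Measurable.iSup hmηρ
  -- integrability
  have hif : Integrable (fun x => 1 - ⨆ y, η x y) μ := by
    refine (integrable_const (1 : ℝ)).mono'
      ((measurable_const.sub hmη).aestronglyMeasurable) (ae_of_all _ fun x => ?_)
    rw [Real.norm_eq_abs, abs_le]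
    constructor <;> [linarith [hsuple x]; linarith [hsupge x]]
  have hifρ : Integrable (fun x => 1 - ⨆ y', ηρ x y') μ := by
    refine (integrable_const (1 : ℝ)).mono'
      ((measurable_const.sub hmηρsup).aestronglyMeasurable) (ae_of_all _ fun x => ?_)
    rw [Real.norm_eq_abs, abs_le]
    constructor <;> [linarith [hsupρle x]; linarith [hsupρge x]]
  have hiη : Integrable (fun x => ⨆ y, η x y) μ := by
    refine (integrable_const (1 : ℝ)).mono' hmη.aestronglyMeasurable (ae_of_all _ fun x => ?_)
    rw [Real.norm_eq_abs, abs_le]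
    constructor <;> [linarith [hsupge x]; linarith [hsuple x]]
  -- key pointwise inequalities
  have key : ∀ᵐ x ∂μ,
      ((1 - ⨆ y', ηρ x y') ≤ (1 - ⨆ y, η x y) + ρmax) ∧
      ((1 - Tmax) * (1 - ⨆ y, η x y) + ρmin * (⨆ y, η x y) ≤ 1 - ⨆ y', ηρ x y') := by
    filter_upwards [hmax] with x hx
    obtain ⟨h1, h2⟩ := hx
    have hgη : (⨆ y, η x y) = η x (yx x) :=
      le_antisymm (ciSup_le h1) (le_ciSup (Set.Finite.bddAbove (Set.finite_range _)) (yx x))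
    have hgρ : (⨆ y', ηρ x y') = ηρ x (yx x) :=
      le_antisymm (ciSup_le h2) (le_ciSup (Set.Finite.bddAbove (Set.finite_range _)) (yx x))
    rw [hgη, hgρ]
    set g : ℝ := η x (yx x) with hgdef
    have hg0 : 0 ≤ g := hnn x (yx x)
    have hg1 : g ≤ 1 := hηle1 x (yx x)
    have hρval : ηρ x (yx x) = ∑ y, t (yx x) y * η x y := hηρ x (yx x)
    have htd_lo : 1 - ρmax ≤ t (yx x) (yx x) := by
      have := Finset.le_sup' (fun y : Y => 1 - t y y) (Finset.mem_univ (yx x))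
      linarith
    have htd_hi : t (yx x) (yx x) ≤ 1 - ρmin := by
      have := Finset.inf'_le (fun y : Y => 1 - t y y) (Finset.mem_univ (yx x))
      linarith
    -- lower bound on ηρ x (yx x)
    have hlo : t (yx x) (yx x) * g ≤ ηρ x (yx x) := by
      rw [hρval]
      exact Finset.single_le_sum (f := fun y => t (yx x) y * η x y)
        (fun y _ => mul_nonneg (ht0 _ y) (hnn x y)) (Finset.mem_univ (yx x))
    -- upper bound on ηρ x (yx x)
    have hsplit : ηρ x (yx x)
        = t (yx x) (yx x) * g + ∑ y ∈ Finset.univ.erase (yx x), t (yx x) y * η x y := by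
      rw [hρval, ← Finset.add_sum_erase _ _ (Finset.mem_univ (yx x))]
    have hrest_sum : ∑ y ∈ Finset.univ.erase (yx x), η x y = 1 - g := by
      have := Finset.add_sum_erase Finset.univ (fun y => η x y) (Finset.mem_univ (yx x))
      rw [hsum x] at this
      linarith
    have hrest : ∑ y ∈ Finset.univ.erase (yx x), t (yx x) y * η x y ≤ Tmax * (1 - g) := by
      calc ∑ y ∈ Finset.univ.erase (yx x), t (yx x) y * η x y
          ≤ ∑ y ∈ Finset.univ.erase (yx x), Tmax * η x y := by
            refine Finset.sum_le_sum fun y hy => ?_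
            have hyne : yx x ≠ y := fun h => (Finset.mem_erase.mp hy).1 h.symm
            have hmem : (yx x, y) ∈ (Finset.univ : Finset (Y × Y)).filter
                fun p => p.1 ≠ p.2 := Finset.mem_filter.mpr ⟨Finset.mem_univ _, hyne⟩
            exact mul_le_mul_of_nonneg_right (Finset.le_sup' (fun p : Y × Y => t p.1 p.2) hmem)
              (hnn x y)
        _ = Tmax * (1 - g) := by rw [← Finset.mul_sum, hrest_sum]
    have hhi : ηρ x (yx x) ≤ (1 - ρmin) * g + Tmax * (1 - g) := by
      rw [hsplit]
      have := mul_le_mul_of_nonneg_right htd_hi hg0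
      linarith
    constructor
    · linarith [hηρnn x (yx x), mul_nonneg (sub_nonneg.mpr htd_lo) hg0, mul_nonneg hρmax0 (sub_nonneg.mpr hg1)]
    · linarith [hhi]
  -- nonnegativity of Rstar
  have hRstar0 : 0 ≤ Rstar := by
    rw [hR]
    exact integral_nonneg fun x => sub_nonneg.mpr (hsuple x)
  -- integral of sup η
  have hsupint : ∫ x, (⨆ y, η x y) ∂μ = 1 - Rstar := by
    have h1 : ∫ x, ((1 : ℝ) - (1 - ⨆ y, η x y)) ∂μ
        = (∫ _, (1 : ℝ) ∂μ) - ∫ x, (1 - ⨆ y, η x y) ∂μ :=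
      integral_sub (integrable_const _) hif
    simp only [sub_sub_cancel] at h1
    rw [h1, integral_const, probReal_univ, smul_eq_mul, one_mul, hR]
  -- upper bound
  have hub : Rρ ≤ Rstar + ρmax := by
    rw [hR, hRρ]
    have hmono := integral_mono_ae hifρ (hif.add (integrable_const ρmax))
      (key.mono fun x hx => hx.1)
    simp only [Pi.add_apply] at hmono
    rwa [integral_add hif (integrable_const _), integral_const, probReal_univ,
      smul_eq_mul, one_mul] at hmono
  -- lower bound
  have hlb : (1 - Tmax) * Rstar + ρmin * (1 - Rstar) ≤ Rρ := by
    rw [hRρ]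
    have hint2 : Integrable (fun x => (1 - Tmax) * (1 - ⨆ y, η x y) + ρmin * (⨆ y, η x y)) μ :=
      (hif.const_mul _).add (hiη.const_mul _)
    have hmono := integral_mono_ae hint2 hifρ (key.mono fun x hx => hx.2)
    rwa [integral_add (hif.const_mul _) (hiη.const_mul _), integral_const_mul,
      integral_const_mul, hsupint, ← hR] at hmono
  refine ⟨?_, by linarith⟩
  nlinarith [mul_nonneg (sub_nonneg.mpr hT1) hRstar0,
    mul_nonneg hρmin0 (sub_nonneg.mpr hRs), mul_nonneg hs0 hT0]
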